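/- arXiv:2305.11010 — 2 statements merged into one kernel-verified Lean document; each statement's English description precedes it below -/
import Mathlib

section
/- KKT stationarity and complementary slackness for a convex QP with one affine inequality constraint: if u* minimizes (u-u_d)ᵀP(u-u_d) over {u : aᵀu + b ≥ 0} with P positive definite, then there exists λ ≥ 0 such that 2P(u* - u_d) = λ a and λ(aᵀu* + b) = 0. -/
open Matrix

private lemma qp_key (c d t0 : ℝ) (hc : 0 ≤ c) (ht0 : 0 < t0)
    (h : ∀ t : ℝ, 0 < t → t ≤ t0 → 0 ≤ c * t ^ 2 + d * t) : 0 ≤ d := by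
  by_contra hd
  push_neg at hd
  have hden : 0 < 2 * c + 2 := by linarith
  set t := min t0 (-d / (2 * c + 2)) with ht
  have h1 : 0 < t := lt_min ht0 (div_pos (by linarith) hden)
  have h2 := h t h1 (min_le_left _ _)
  have h3 : t ≤ -d / (2 * c + 2) := min_le_right _ _
  have h4 : t * (2 * c + 2) ≤ -d := (le_div_iff₀ hden).mp h3
  nlinarith [mul_pos h1 h1, mul_nonneg hc h1.le, mul_le_mul_of_nonneg_left h4 hc,
    mul_le_mul_of_nonneg_left h4 h1.le]

/-- KKT stationarity and complementary slackness for a one-constraint convex QP. -/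
theorem qp_kkt (m : ℕ) (P : Matrix (Fin m) (Fin m) ℝ) (hP : P.PosDef)
    (u_d a : Fin m → ℝ) (b : ℝ) (uStar : Fin m → ℝ)
    (hfeasne : ∃ u : Fin m → ℝ, a ⬝ᵥ u + b ≥ 0)
    (hfeas : a ⬝ᵥ uStar + b ≥ 0)
    (hopt : ∀ u : Fin m → ℝ, a ⬝ᵥ u + b ≥ 0 →
      (uStar - u_d) ⬝ᵥ P.mulVec (uStar - u_d) ≤ (u - u_d) ⬝ᵥ P.mulVec (u - u_d)) :
    ∃ lam : ℝ, 0 ≤ lam ∧ (2 : ℝ) • P.mulVec (uStar - u_d) = lam • a ∧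
      lam * (a ⬝ᵥ uStar + b) = 0 := by
  set w : Fin m → ℝ := uStar - u_d with hw
  set g : Fin m → ℝ := P.mulVec w with hg
  have hPsym : Pᵀ = P := by simpa using hP.isHermitian.eq
  have hsym : ∀ u v : Fin m → ℝ, u ⬝ᵥ P.mulVec v = v ⬝ᵥ P.mulVec u := by
    intro u v
    rw [dotProduct_mulVec, ← mulVec_transpose, hPsym, dotProduct_comm]
  have hnn : ∀ v : Fin m → ℝ, 0 ≤ v ⬝ᵥ P.mulVec v := fun v => by
    simpa using hP.posSemidef.dotProduct_mulVec_nonneg v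
  -- quadratic expansion of the objective along a direction
  have hquad : ∀ (v : Fin m → ℝ) (t : ℝ), a ⬝ᵥ (uStar + t • v) + b ≥ 0 →
      0 ≤ (v ⬝ᵥ P.mulVec v) * t ^ 2 + (2 * (v ⬝ᵥ g)) * t := by
    intro v t hfe
    have hle := hopt (uStar + t • v) hfe
    have hexp : (uStar + t • v - u_d) ⬝ᵥ P.mulVec (uStar + t • v - u_d)
        = w ⬝ᵥ P.mulVec w + ((v ⬝ᵥ P.mulVec v) * t ^ 2 + (2 * (v ⬝ᵥ g)) * t) := by
      have : uStar + t • v - u_d = w + t • v := by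
        rw [hw]; abel
      rw [this, hg]
      simp only [mulVec_add, mulVec_smul, add_dotProduct, dotProduct_add,
        dotProduct_smul, smul_dotProduct, smul_eq_mul, hsym w v]
      ring
    rw [hexp] at hle
    linarith
  -- directional optimality: feasible directions have nonnegative derivative
  have hdir : ∀ v : Fin m → ℝ, 0 ≤ a ⬝ᵥ v → 0 ≤ v ⬝ᵥ g := by
    intro v hav
    have := qp_key (v ⬝ᵥ P.mulVec v) (2 * (v ⬝ᵥ g)) 1 (hnn v) one_pos ?_
    · linarith
    · intro t ht _
      apply hquad
      have : a ⬝ᵥ (uStar + t • v) + b = (a ⬝ᵥ uStar + b) + t * (a ⬝ᵥ v) := by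
        simp [dotProduct_add, dotProduct_smul]; ring
      rw [this]
      have : 0 ≤ t * (a ⬝ᵥ v) := mul_nonneg ht.le hav
      linarith
  rcases hfeas.lt_or_eq with hs | hs
  · -- constraint inactive: unconstrained minimum, gradient is zero
    have hall : ∀ v : Fin m → ℝ, 0 ≤ v ⬝ᵥ g := by
      intro v
      have ht0 : 0 < (a ⬝ᵥ uStar + b) / (|a ⬝ᵥ v| + 1) := by positivity
      have := qp_key (v ⬝ᵥ P.mulVec v) (2 * (v ⬝ᵥ g)) _ (hnn v) ht0 ?_
      · linarith
      · intro t ht htle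
        apply hquad
        have heq : a ⬝ᵥ (uStar + t • v) + b = (a ⬝ᵥ uStar + b) + t * (a ⬝ᵥ v) := by
          simp [dotProduct_add, dotProduct_smul]; ring
        rw [heq]
        have h1 : t * (a ⬝ᵥ v) ≥ -(t * (|a ⬝ᵥ v| + 1)) := by
          have := neg_abs_le (a ⬝ᵥ v)
          nlinarith
        have h2 : t * (|a ⬝ᵥ v| + 1) ≤ a ⬝ᵥ uStar + b := by
          have habs : 0 < |a ⬝ᵥ v| + 1 := by positivity
          calc t * (|a ⬝ᵥ v| + 1) ≤ ((a ⬝ᵥ uStar + b) / (|a ⬝ᵥ v| + 1)) * (|a ⬝ᵥ v| + 1) :=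
                mul_le_mul_of_nonneg_right htle habs.le
            _ = a ⬝ᵥ uStar + b := div_mul_cancel₀ _ habs.ne'
        linarith
    have hgzero : g = 0 := by
      funext i
      have h1 := hall (Pi.single i 1)
      have h2 := hall (-(Pi.single i 1))
      simp [neg_dotProduct] at h1 h2 ⊢
      linarith
    exact ⟨0, le_refl 0, by simp [hgzero], by simp⟩
  · -- constraint active
    by_cases ha : a = 0
    · have hall : ∀ v : Fin m → ℝ, 0 ≤ v ⬝ᵥ g := fun v => hdir v (by simp [ha])
      have hgzero : g = 0 := by
        funext i
        have h1 := hall (Pi.single i 1)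
        have h2 := hall (-(Pi.single i 1))
        simp [neg_dotProduct] at h1 h2 ⊢
        linarith
      exact ⟨0, le_refl 0, by simp [hgzero], by simp⟩
    · have haa : 0 < a ⬝ᵥ a := by
        have h1 : 0 ≤ a ⬝ᵥ a := by simpa using dotProduct_self_star_nonneg a
        rcases h1.lt_or_eq with h | h
        · exact h
        · exact absurd (dotProduct_self_eq_zero.mp h.symm) ha
      have hga : 0 ≤ a ⬝ᵥ g := hdir a haa.le
      set lam : ℝ := 2 * (a ⬝ᵥ g) / (a ⬝ᵥ a) with hlam
      have hzero : ∀ v : Fin m → ℝ, a ⬝ᵥ v = 0 → v ⬝ᵥ g = 0 := by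
        intro v hv
        have h1 := hdir v hv.ge
        have h2 := hdir (-v) (by simp [dotProduct_neg, hv])
        simp [neg_dotProduct] at h2
        linarith
      have hrep : ∀ v : Fin m → ℝ, 2 * (v ⬝ᵥ g) = lam * (a ⬝ᵥ v) := by
        intro v
        have hv' : a ⬝ᵥ (v - ((a ⬝ᵥ v) / (a ⬝ᵥ a)) • a) = 0 := by
          simp [dotProduct_sub, dotProduct_smul, smul_eq_mul]
          field_simp
          ring
        have := hzero _ hv'
        simp [sub_dotProduct, smul_dotProduct, smul_eq_mul] at this
        have hag : a ⬝ᵥ g = g ⬝ᵥ a := dotProduct_comm a g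
        rw [hlam]
        field_simp at this ⊢
        nlinarith [this]
      refine ⟨lam, div_nonneg (by linarith) haa.le, ?_, by rw [← hs]; ring⟩
      funext i
      have h1 := hrep (Pi.single i 1)
      simp [single_dotProduct, dotProduct_single] at h1
      simp [Pi.smul_apply, smul_eq_mul]
      rw [hg] at h1 ⊢
      simpa [mul_comm] using h1
end

section
/- Sensitivity of the optimal value: for the QP min (u-u_d)ᵀP(u-u_d) s.t. aᵀu + b ≥ 0 with P positive definite, a ≠ 0, and aᵀu_d + b < 0, the optimal cost is J*(b) = (aᵀu_d + b)²/(aᵀP⁻¹a), and its derivative with respect to b equals −λ*, the negative of the optimal Lagrange multiplier λ* = −2(aᵀu_d + b)/(aᵀP⁻¹a). -/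
open Matrix

lemma qp_expand_aux {m : ℕ} (P : Matrix (Fin m) (Fin m) ℝ) (v w : Fin m → ℝ) (t : ℝ) :
    (v - t • w) ⬝ᵥ P.mulVec (v - t • w)
      = v ⬝ᵥ P.mulVec v - t * (v ⬝ᵥ P.mulVec w) - t * (w ⬝ᵥ P.mulVec v)
        + t ^ 2 * (w ⬝ᵥ P.mulVec w) := by
  rw [Matrix.mulVec_sub, Matrix.mulVec_smul]
  simp only [sub_dotProduct, dotProduct_sub, smul_dotProduct, dotProduct_smul, smul_eq_mul]
  ring

/-- Sensitivity of the optimal value of the QP with respect to the constraint offset b: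
the optimal cost is (aᵀu_d+b)²/(aᵀP⁻¹a) and its derivative in b is the negative of the
optimal multiplier λ* = -2(aᵀu_d+b)/(aᵀP⁻¹a). -/
theorem qp_sensitivity (m : ℕ) (P : Matrix (Fin m) (Fin m) ℝ) (hP : P.PosDef)
    (u_d a : Fin m → ℝ) (b : ℝ) (ha : a ≠ 0) (hactive : a ⬝ᵥ u_d + b < 0) :
    IsLeast ((fun u : Fin m → ℝ => (u - u_d) ⬝ᵥ P.mulVec (u - u_d)) ''
        {u : Fin m → ℝ | a ⬝ᵥ u + b ≥ 0})
      ((a ⬝ᵥ u_d + b) ^ 2 / (a ⬝ᵥ P⁻¹.mulVec a)) ∧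
    HasDerivAt (fun b' : ℝ => (a ⬝ᵥ u_d + b') ^ 2 / (a ⬝ᵥ P⁻¹.mulVec a))
      (-(-2 * (a ⬝ᵥ u_d + b) / (a ⬝ᵥ P⁻¹.mulVec a))) b := by
  have hPdet : IsUnit P.det := isUnit_iff_ne_zero.2 hP.det_pos.ne'
  have hsymT : Pᵀ = P := by
    have := hP.isHermitian.eq
    simpa using this
  set s : ℝ := a ⬝ᵥ u_d + b with hs
  set w : Fin m → ℝ := P⁻¹.mulVec a with hw
  set q : ℝ := a ⬝ᵥ P⁻¹.mulVec a with hq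
  have hq_pos : 0 < q := by
    have := hP.inv.dotProduct_mulVec_pos ha
    simpa using this
  have hPw : P.mulVec w = a := by
    rw [hw, Matrix.mulVec_mulVec, Matrix.mul_nonsing_inv _ hPdet, Matrix.one_mulVec]
  have hsym : ∀ x y : Fin m → ℝ, x ⬝ᵥ P.mulVec y = y ⬝ᵥ P.mulVec x := by
    intro x y
    rw [Matrix.dotProduct_mulVec, ← Matrix.mulVec_transpose, hsymT, dotProduct_comm]
  have hwq : w ⬝ᵥ P.mulVec w = q := by
    rw [hPw, dotProduct_comm, hq, hw]
  have haw : a ⬝ᵥ w = q := by rw [hq, hw]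
  clear_value w q
  constructor
  · constructor
    · -- membership: witness u* = u_d + (s/q) • (-w) i.e. u_d - (s/q) • w
      refine ⟨u_d - (s / q) • w, ?_, ?_⟩
      · simp only [Set.mem_setOf_eq, dotProduct_sub, dotProduct_smul, smul_eq_mul, haw]
        have : s / q * q = s := by field_simp
        rw [hs] at this ⊢
        linarith
      · show (u_d - (s / q) • w - u_d) ⬝ᵥ P.mulVec (u_d - (s / q) • w - u_d) = s ^ 2 / q
        have h0 : u_d - (s / q) • w - u_d = (0 : Fin m → ℝ) - (s / q) • w := by abel
        rw [h0, qp_expand_aux, hwq]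
        simp only [dotProduct_zero, Matrix.mulVec_zero, dotProduct_zero,
          zero_dotProduct]
        field_simp
        ring
    · rintro y ⟨u, hu, rfl⟩
      simp only [Set.mem_setOf_eq] at hu
      set v : Fin m → ℝ := u - u_d with hv
      set r : ℝ := a ⬝ᵥ v with hr
      have hrs : -s ≤ r := by
        have hsplit : r = a ⬝ᵥ u - a ⬝ᵥ u_d := by rw [hr, hv, dotProduct_sub]
        rw [hs, hsplit]; linarith
      have hwv : w ⬝ᵥ P.mulVec v = r := by
        rw [hsym, hPw, dotProduct_comm, ← hr]
      have hvw : v ⬝ᵥ P.mulVec w = r := by rw [hPw, dotProduct_comm, ← hr]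
      show s ^ 2 / q ≤ v ⬝ᵥ P.mulVec v
      clear_value v r
      have hr_pos : 0 < r := by linarith
      have hr2 : s ^ 2 ≤ r ^ 2 := by nlinarith
      have hnn : (0:ℝ) ≤ (v - (r / q) • w) ⬝ᵥ P.mulVec (v - (r / q) • w) := by
        have := hP.posSemidef.dotProduct_mulVec_nonneg (v - (r / q) • w)
        simpa using this
      rw [qp_expand_aux, hwv, hvw, hwq] at hnn
      have hexp : r ^ 2 / q ≤ v ⬝ᵥ P.mulVec v := by
        have hkey : r / q * r + r / q * r - (r / q) ^ 2 * q = r ^ 2 / q := by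
          field_simp; ring
        nlinarith [hnn, hkey]
      have h1 : s ^ 2 / q ≤ r ^ 2 / q := by gcongr
      linarith
  · have h1 : HasDerivAt (fun b' : ℝ => a ⬝ᵥ u_d + b') 1 b := by
      simpa using (hasDerivAt_id b).const_add (a ⬝ᵥ u_d)
    have h2 : HasDerivAt (fun b' : ℝ => (a ⬝ᵥ u_d + b') ^ 2)
        (2 * (a ⬝ᵥ u_d + b)) b := by
      have := h1.fun_pow 2
      simpa using this
    have h3 : HasDerivAt (fun b' : ℝ => (a ⬝ᵥ u_d + b') ^ 2 / q)
        (2 * (a ⬝ᵥ u_d + b) / q) b := h2.div_const q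
    convert h3 using 1
    rw [hs]
    field_simp
end
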